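/- arXiv:2101.00758 — 9 statements merged into one kernel-verified Lean document; each statement's English description precedes it below -/
import Mathlib

section
/- Let s, a, d, Tmax, ρ, δ, β, q, c, k1 be positive real numbers and let T0 = (Tmax/(2a))·((a − d) + √((a − d)² + 4as/Tmax)). If qβT0 < (c + k1·T0)(δ + ρ), then every complex root λ of the polynomial (λ − (a − d − 2aT0/Tmax)) · (λ² + (δ + ρ + c + k1·T0)·λ + (c + k1·T0)(δ+ρ) − qβT0) satisfies Re λ < 0. -/
lemma quad_root_re_neg (B C : ℝ) (hB : 0 < B) (hC : 0 < C) (z : ℂ)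
    (h : z^2 + (B:ℂ)*z + (C:ℂ) = 0) : z.re < 0 := by
  have hre := congrArg Complex.re h
  have him := congrArg Complex.im h
  simp [Complex.add_re, Complex.add_im, Complex.mul_re, Complex.mul_im, pow_two] at hre him
  set x := z.re with hx
  set y := z.im with hy
  have hfac : y * (2*x + B) = 0 := by nlinarith
  rcases mul_eq_zero.mp hfac with h0 | h0
  · rw [h0] at hre
    nlinarith [sq_nonneg x]
  · nlinarith

theorem stmt_1 (s a d Tmax ρ δ β q c k1 : ℝ)
    (hs : 0 < s) (ha : 0 < a) (hd : 0 < d) (hTmax : 0 < Tmax) (hρ : 0 < ρ)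
    (hδ : 0 < δ) (hβ : 0 < β) (hq : 0 < q) (hc : 0 < c) (hk1 : 0 < k1)
    (T0 : ℝ)
    (hT0 : T0 = (Tmax/(2*a)) * ((a - d) + Real.sqrt ((a - d)^2 + 4*a*s/Tmax)))
    (hR0 : q*β*T0 < (c + k1*T0)*(δ + ρ)) :
    ∀ lam : ℂ,
      (lam - ((a - d - 2*a*T0/Tmax : ℝ) : ℂ)) *
        (lam^2 + ((δ + ρ + c + k1*T0 : ℝ) : ℂ) * lam +
          ((c + k1*T0 : ℝ) : ℂ) * ((δ + ρ : ℝ) : ℂ) - ((q*β*T0 : ℝ) : ℂ)) = 0 →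
      lam.re < 0 := by
  set S := Real.sqrt ((a - d)^2 + 4*a*s/Tmax) with hSdef
  have harg : (0:ℝ) < (a - d)^2 + 4*a*s/Tmax := by positivity
  have hS : 0 < S := Real.sqrt_pos.mpr harg
  have hS2 : S^2 = (a - d)^2 + 4*a*s/Tmax := Real.sq_sqrt harg.le
  have hgt : d - a < S := by nlinarith [div_pos (by positivity : (0:ℝ) < 4*a*s) hTmax]
  have hT0pos : 0 < T0 := by
    rw [hT0]
    have : 0 < (a - d) + S := by linarith
    positivity
  have hratio : 2*a*T0/Tmax = (a - d) + S := by
    rw [hT0]; field_simp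
  intro lam h
  rcases mul_eq_zero.mp h with h1 | h2
  · rw [sub_eq_zero] at h1
    rw [h1, Complex.ofReal_re, hratio]
    linarith
  · have hB : 0 < δ + ρ + c + k1*T0 := by positivity
    have hC : 0 < (c + k1*T0)*(δ + ρ) - q*β*T0 := by linarith
    apply quad_root_re_neg (δ + ρ + c + k1*T0) ((c + k1*T0)*(δ + ρ) - q*β*T0) hB hC lam
    rw [← h2]; push_cast; ring
end

section
/- Let s, d, a, Tmax, β, α, ρ, δ, q, c, k1 be positive real numbers. Let T, I, V : ℝ → ℝ be differentiable functions that are positive on [0, ∞) and satisfy, for all t ≥ 0: T'(t) = s − d·T(t) + a·T(t)·(1 − T(t)/Tmax) − β·T(t)·V(t)/(1 + α·V(t)) + ρ·I(t), I'(t) = β·T(t)·V(t)/(1 + α·V(t)) − (δ+ρ)·I(t), and V'(t) = q·I(t) − c·V(t) − k1·V(t)·T(t). Then there exists a real number M > 0 such that T(t) ≤ M, I(t) ≤ M and V(t) ≤ M for all t ≥ 0; in particular every positive solution of the system is bounded. -/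
lemma decay_bound (lam K : ℝ) (hlam : 0 < lam) (f : ℝ → ℝ) (hf : Differentiable ℝ f)
    (h' : ∀ t ≥ (0:ℝ), deriv f t ≤ K - lam * f t) :
    ∀ t ≥ (0:ℝ), f t ≤ max (f 0) (K / lam) := by
  set C := K / lam with hC
  have hlamC : lam * C = K := by rw [hC]; field_simp
  set g : ℝ → ℝ := fun t => (f t - C) * Real.exp (lam * t) with hgdef
  have hgd : ∀ t : ℝ, HasDerivAt g
      (deriv f t * Real.exp (lam * t) + (f t - C) * (lam * Real.exp (lam * t))) t := by
    intro t
    have h1 : HasDerivAt (fun t => f t - C) (deriv f t) t := ((hf t).hasDerivAt).sub_const C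
    have h2 : HasDerivAt (fun t => Real.exp (lam * t)) (lam * Real.exp (lam * t)) t := by
      have := (Real.hasDerivAt_exp (lam * t)).comp t ((hasDerivAt_id t).const_mul lam)
      exact this.congr_deriv (by ring)
    exact h1.mul h2
  have hgdiff : Differentiable ℝ g := fun t => (hgd t).differentiableAt
  have mono : AntitoneOn g (Set.Ici 0) := by
    apply antitoneOn_of_deriv_nonpos (convex_Ici 0) hgdiff.continuous.continuousOn
      hgdiff.differentiableOn
    intro x hx
    rw [interior_Ici] at hx
    have hx0 : (0:ℝ) ≤ x := le_of_lt hx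
    rw [(hgd x).deriv]
    have hfx := h' x hx0
    have he : 0 < Real.exp (lam * x) := Real.exp_pos _
    nlinarith [he, hfx, hlamC]
  intro t ht
  have hgt : g t ≤ g 0 := mono Set.self_mem_Ici ht ht
  have hg0 : g 0 = f 0 - C := by simp [hgdef]
  have he1 : (1:ℝ) ≤ Real.exp (lam * t) :=
    Real.one_le_exp (mul_nonneg hlam.le ht)
  rw [hg0] at hgt
  by_cases hcase : f t ≤ C
  · exact hcase.trans (le_max_right _ _)
  · push_neg at hcase
    have h2 : f t - C ≤ (f t - C) * Real.exp (lam * t) := by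
      nlinarith [sub_pos.2 hcase]
    have : f t - C ≤ f 0 - C := h2.trans hgt
    have : f t ≤ f 0 := by linarith
    exact this.trans (le_max_left _ _)

theorem stmt_3 (s d a Tmax β α ρ δ q c k1 : ℝ)
    (hs : 0 < s) (hd : 0 < d) (ha : 0 < a) (hTmax : 0 < Tmax) (hβ : 0 < β)
    (hα : 0 < α) (hρ : 0 < ρ) (hδ : 0 < δ) (hq : 0 < q) (hc : 0 < c) (hk1 : 0 < k1)
    (T I V : ℝ → ℝ)
    (hTdiff : Differentiable ℝ T) (hIdiff : Differentiable ℝ I)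
    (hVdiff : Differentiable ℝ V)
    (hTpos : ∀ t ≥ (0:ℝ), 0 < T t) (hIpos : ∀ t ≥ (0:ℝ), 0 < I t)
    (hVpos : ∀ t ≥ (0:ℝ), 0 < V t)
    (hT : ∀ t ≥ (0:ℝ), deriv T t =
      s - d * T t + a * T t * (1 - T t / Tmax) - β * T t * V t / (1 + α * V t) + ρ * I t)
    (hI : ∀ t ≥ (0:ℝ), deriv I t =
      β * T t * V t / (1 + α * V t) - (δ + ρ) * I t)
    (hV : ∀ t ≥ (0:ℝ), deriv V t = q * I t - c * V t - k1 * V t * T t) :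
    ∃ M : ℝ, 0 < M ∧ ∀ t ≥ (0:ℝ), T t ≤ M ∧ I t ≤ M ∧ V t ≤ M := by
  set m : ℝ := min d δ with hm
  have hm0 : 0 < m := lt_min hd hδ
  set K₁ : ℝ := s + a * Tmax / 4 with hK₁
  set W : ℝ → ℝ := fun t => T t + I t with hWdef
  have hWdiff : Differentiable ℝ W := hTdiff.add hIdiff
  have hW' : ∀ t ≥ (0:ℝ), deriv W t ≤ K₁ - m * W t := by
    intro t ht
    have hderiv : deriv W t = deriv T t + deriv I t := deriv_add (hTdiff t) (hIdiff t)
    rw [hderiv, hT t ht, hI t ht]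
    have hTp := hTpos t ht
    have hIp := hIpos t ht
    -- logistic bound
    have hlog : a * T t * (1 - T t / Tmax) ≤ a * Tmax / 4 := by
      have h6 : a * T t * (1 - T t / Tmax) * Tmax = a * (T t * Tmax - T t ^ 2) := by
        field_simp
      nlinarith [sq_nonneg (T t - Tmax / 2), hTmax, ha, mul_pos ha hTmax]
    have h7 : m * T t ≤ d * T t := mul_le_mul_of_nonneg_right (min_le_left d δ) hTp.le
    have h8 : m * I t ≤ δ * I t := mul_le_mul_of_nonneg_right (min_le_right d δ) hIp.le
    simp only [hWdef, hK₁]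
    linarith
  have hWbd := decay_bound m K₁ hm0 W hWdiff hW'
  set M₁ : ℝ := max (W 0) (K₁ / m) with hM₁
  have hM₁pos : 0 < M₁ := by
    have : 0 < W 0 := add_pos (hTpos 0 le_rfl) (hIpos 0 le_rfl)
    exact lt_of_lt_of_le this (le_max_left _ _)
  have hTbd : ∀ t ≥ (0:ℝ), T t ≤ M₁ := by
    intro t ht
    have := hWbd t ht
    have hIp := hIpos t ht
    simp only [hWdef] at this
    linarith
  have hIbd : ∀ t ≥ (0:ℝ), I t ≤ M₁ := by
    intro t ht
    have := hWbd t ht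
    have hTp := hTpos t ht
    simp only [hWdef] at this
    linarith
  have hV' : ∀ t ≥ (0:ℝ), deriv V t ≤ q * M₁ - c * V t := by
    intro t ht
    rw [hV t ht]
    have h1 : q * I t ≤ q * M₁ := mul_le_mul_of_nonneg_left (hIbd t ht) hq.le
    have h2 : 0 < k1 * V t * T t :=
      mul_pos (mul_pos hk1 (hVpos t ht)) (hTpos t ht)
    linarith
  have hVbd := decay_bound c (q * M₁) hc V hVdiff hV'
  set M₂ : ℝ := max (V 0) (q * M₁ / c) with hM₂
  refine ⟨max M₁ M₂, lt_of_lt_of_le hM₁pos (le_max_left _ _), ?_⟩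
  intro t ht
  exact ⟨(hTbd t ht).trans (le_max_left _ _), (hIbd t ht).trans (le_max_left _ _),
    (hVbd t ht).trans (le_max_right _ _)⟩
end

section
/- Let s, d, a, Tmax, β, α, ρ, δ, q, c, k1 be positive real numbers with qβ > (δ+ρ)·k1, let T0 = (Tmax/(2a))·((a − d) + √((a − d)² + 4as/Tmax)), and assume (qβ − (δ+ρ)·k1)·T0 > c·(δ+ρ). Then there exist positive real numbers T̄, Ī, V̄ such that s − d·T̄ + a·T̄·(1 − T̄/Tmax) − β·T̄·V̄/(1 + α·V̄) + ρ·Ī = 0, β·T̄·V̄/(1 + α·V̄) − (δ+ρ)·Ī = 0, and q·Ī − c·V̄ − k1·V̄·T̄ = 0. -/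
set_option maxHeartbeats 1000000


theorem stmt_7 (s d a Tmax β α ρ δ q c k1 : ℝ)
    (hs : 0 < s) (hd : 0 < d) (ha : 0 < a) (hTmax : 0 < Tmax) (hβ : 0 < β)
    (hα : 0 < α) (hρ : 0 < ρ) (hδ : 0 < δ) (hq : 0 < q) (hc : 0 < c) (hk1 : 0 < k1)
    (hqβ : q*β > (δ+ρ)*k1)
    (T0 : ℝ)
    (hT0 : T0 = (Tmax/(2*a)) * ((a - d) + Real.sqrt ((a - d)^2 + 4*a*s/Tmax)))
    (hR0 : (q*β - (δ+ρ)*k1) * T0 > c*(δ+ρ)) :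
    ∃ Tbar Ibar Vbar : ℝ, 0 < Tbar ∧ 0 < Ibar ∧ 0 < Vbar ∧
      s - d*Tbar + a*Tbar*(1 - Tbar/Tmax) - β*Tbar*Vbar/(1 + α*Vbar) + ρ*Ibar = 0 ∧
      β*Tbar*Vbar/(1 + α*Vbar) - (δ+ρ)*Ibar = 0 ∧
      q*Ibar - c*Vbar - k1*Vbar*Tbar = 0 := by
  have hδρ : 0 < δ + ρ := by linarith
  have hM : 0 < q*β - (δ+ρ)*k1 := by linarith
  set Ts : ℝ := c*(δ+ρ)/(q*β - (δ+ρ)*k1) with hTs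
  have hTspos : 0 < Ts := div_pos (by positivity) hM
  have hTsT0 : Ts < T0 := by
    rw [hTs, div_lt_iff₀ hM]; nlinarith [hR0]
  have hT0pos : 0 < T0 := hTspos.trans hTsT0
  -- gcl(T0) = 0, where gcl(T) = s*Tmax + (a-d)*T*Tmax - a*T^2
  obtain ⟨r, hrdef, hr2⟩ : ∃ r : ℝ, Real.sqrt ((a - d)^2 + 4*a*s/Tmax) = r ∧
      r^2 = (a-d)^2 + 4*a*s/Tmax := ⟨_, rfl, Real.sq_sqrt (by positivity)⟩
  rw [hrdef] at hT0
  have hr2' : r^2 * Tmax = (a-d)^2 * Tmax + 4*a*s := by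
    rw [hr2]; field_simp
  have hg0' : a*T0^2 = (s + (a-d)*T0)*Tmax := by
    rw [hT0]
    have h2a : (2*a) ≠ 0 := by positivity
    field_simp
    linear_combination hr2'
  -- the reduced (cleared) function
  have hcont : Continuous (fun T : ℝ => q*α*(δ+ρ)*(s*Tmax + (a-d)*T*Tmax - a*T^2)
      - δ*(q*β*T - (δ+ρ)*(c + k1*T))*Tmax) := by fun_prop
  have hFTs : 0 < q*α*(δ+ρ)*(s*Tmax + (a-d)*Ts*Tmax - a*Ts^2)
      - δ*(q*β*Ts - (δ+ρ)*(c + k1*Ts))*Tmax := by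
    have h2 : q*β*Ts - (δ+ρ)*(c + k1*Ts) = 0 := by
      rw [hTs]; field_simp; ring
    have h2' : δ*(q*β*Ts - (δ+ρ)*(c + k1*Ts))*Tmax = 0 := by rw [h2]; ring
    have key : (s*Tmax + (a-d)*Ts*Tmax - a*Ts^2) * T0 =
        (T0 - Ts)*(a*Ts*T0 + s*Tmax) := by
      linear_combination (-Ts) * hg0'
    have hgclTs : 0 < s*Tmax + (a-d)*Ts*Tmax - a*Ts^2 := by
      have hpos : 0 < (s*Tmax + (a-d)*Ts*Tmax - a*Ts^2) * T0 := by
        rw [key]; exact mul_pos (by linarith) (by positivity)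
      rcases mul_pos_iff.mp hpos with ⟨h, _⟩ | ⟨_, h⟩
      · exact h
      · linarith
    have := mul_pos (show (0:ℝ) < q*α*(δ+ρ) by positivity) hgclTs
    linarith
  have hFT0 : q*α*(δ+ρ)*(s*Tmax + (a-d)*T0*Tmax - a*T0^2)
      - δ*(q*β*T0 - (δ+ρ)*(c + k1*T0))*Tmax < 0 := by
    have h2 : 0 < q*β*T0 - (δ+ρ)*(c + k1*T0) := by nlinarith [hR0]
    have e0 : q*α*(δ+ρ)*(s*Tmax + (a-d)*T0*Tmax - a*T0^2) = 0 := by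
      have : s*Tmax + (a-d)*T0*Tmax - a*T0^2 = 0 := by linarith [hg0']
      rw [this, mul_zero]
    have hp : 0 < δ*(q*β*T0 - (δ+ρ)*(c + k1*T0))*Tmax :=
      mul_pos (mul_pos hδ h2) hTmax
    linarith
  -- IVT
  obtain ⟨Tb, hTbmem, hFTb⟩ :=
    intermediate_value_Icc' hTsT0.le hcont.continuousOn
      (Set.mem_Icc.mpr ⟨hFT0.le, hFTs.le⟩)
  simp only at hFTb
  obtain ⟨hTb1, hTb2⟩ := hTbmem
  have hTbgt : Ts < Tb := by
    rcases lt_or_eq_of_le hTb1 with h | h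
    · exact h
    · exfalso; rw [← h] at hFTb; rw [hFTb] at hFTs; exact lt_irrefl 0 hFTs
  have hTbpos : 0 < Tb := hTspos.trans hTbgt
  have hcT : 0 < c + k1*Tb := by positivity
  have hnum : 0 < q*β*Tb - (δ+ρ)*(c + k1*Tb) := by
    have : c*(δ+ρ) < Tb * (q*β - (δ+ρ)*k1) := (div_lt_iff₀ hM).mp hTbgt
    linarith [this, mul_pos hTbpos hM]
  set Vb : ℝ := (q*β*Tb - (δ+ρ)*(c + k1*Tb)) / (α*((δ+ρ)*(c + k1*Tb))) with hVb
  have hVbpos : 0 < Vb := div_pos hnum (by positivity)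
  set Ib : ℝ := (c + k1*Tb)*Vb/q with hIb
  have hIbpos : 0 < Ib := by positivity
  have h1αV : 1 + α*Vb = q*β*Tb/((δ+ρ)*(c + k1*Tb)) := by
    rw [hVb]; field_simp [hα.ne', hδρ.ne', hcT.ne', hq.ne']; ring
  have h1αVpos : 0 < 1 + α*Vb := by rw [h1αV]; positivity
  have hVnum : Vb * (α*((δ+ρ)*(c + k1*Tb))) = q*β*Tb - (δ+ρ)*(c + k1*Tb) := by
    rw [hVb]; exact div_mul_cancel₀ _ (by positivity)
  have hIbq : Ib * q = (c + k1*Tb)*Vb := by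
    rw [hIb]; exact div_mul_cancel₀ _ hq.ne'
  -- the infection-rate identity
  have hfrac : β*Tb*Vb/(1 + α*Vb) = (δ+ρ)*Ib := by
    rw [div_eq_iff h1αVpos.ne', h1αV, hIb]
    field_simp [hδρ.ne', hcT.ne', hq.ne']
  refine ⟨Tb, Ib, Vb, hTbpos, hIbpos, hVbpos, ?_, ?_, ?_⟩
  · rw [hfrac]
    have hgIb : q*α*(δ+ρ)*(s*Tmax + (a-d)*Tb*Tmax - a*Tb^2)
        = δ*Ib*(q*(α*((δ+ρ)*Tmax))) := by
      linear_combination hFTb - δ*Tmax*hVnum - δ*α*(δ+ρ)*Tmax*hIbq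
    have hg2 : s*Tmax + (a-d)*Tb*Tmax - a*Tb^2 = δ*Ib*Tmax := by
      have hne : q*α*(δ+ρ) ≠ 0 := by positivity
      apply mul_left_cancel₀ hne
      linear_combination hgIb
    field_simp
    linear_combination hg2
  · rw [hfrac]; ring
  · rw [hIb]; field_simp; ring
end

section
/- Let β, ρ, δ, q, c, k1, T be positive real numbers satisfying q·β·T ≤ (δ+ρ)·(c + k1·T). Then for all real numbers z1, z2: 2·((δ+ρ)/(βT)²)·z1·(βT·z2 − (δ+ρ)·z1) + (2/(c + k1·T))·z2·(q·z1 − (c + k1·T)·z2) ≤ 0, with equality only if ((δ+ρ)/(βT))·z1 = z2 or z1 = z2 = 0. -/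
theorem stmt_9 (β ρ δ q c k1 T : ℝ)
    (hβ : 0 < β) (hρ : 0 < ρ) (hδ : 0 < δ) (hq : 0 < q) (hc : 0 < c)
    (hk1 : 0 < k1) (hT : 0 < T)
    (hR0 : q*β*T ≤ (δ+ρ)*(c + k1*T)) :
    ∀ z1 z2 : ℝ,
      2*((δ+ρ)/(β*T)^2)*z1*(β*T*z2 - (δ+ρ)*z1)
        + (2/(c + k1*T))*z2*(q*z1 - (c + k1*T)*z2) ≤ 0 ∧
      (2*((δ+ρ)/(β*T)^2)*z1*(β*T*z2 - (δ+ρ)*z1)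
        + (2/(c + k1*T))*z2*(q*z1 - (c + k1*T)*z2) = 0 →
        ((δ+ρ)/(β*T))*z1 = z2 ∨ (z1 = 0 ∧ z2 = 0)) := by
  intro z1 z2
  set A := δ + ρ with hAdef
  set B := β * T with hBdef
  set C := c + k1 * T with hCdef
  have hA : 0 < A := by positivity
  have hB : 0 < B := by positivity
  have hC : 0 < C := by positivity
  have hs : 0 ≤ A * C - q * B := by nlinarith [hR0]
  set Q : ℝ := (A*C + q*B) * (A*z1 - B*z2)^2 + (A*C - q*B) * ((A*z1)^2 + (B*z2)^2)
    with hQdef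
  have hQnn : 0 ≤ Q := by
    have h1 : 0 ≤ (A*C + q*B) * (A*z1 - B*z2)^2 := by positivity
    have h2 : 0 ≤ (A*C - q*B) * ((A*z1)^2 + (B*z2)^2) := by positivity
    linarith
  have hden : 0 < A * B^2 * C := by positivity
  have key : 2*(A/B^2)*z1*(B*z2 - A*z1) + (2/C)*z2*(q*z1 - C*z2)
      = -Q / (A * B^2 * C) := by
    field_simp
    ring
  constructor
  · rw [key]
    apply div_nonpos_of_nonpos_of_nonneg
    · linarith
    · linarith
  · intro hEq
    rw [key] at hEq
    have hQ0 : Q = 0 := by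
      have := div_eq_zero_iff.mp hEq
      rcases this with h | h
      · linarith
      · exact absurd h (ne_of_gt hden)
    have hsq : (A*z1 - B*z2)^2 = 0 := by
      have h2 : 0 ≤ (A*C - q*B) * ((A*z1)^2 + (B*z2)^2) := by positivity
      have h1 : (A*C + q*B) * (A*z1 - B*z2)^2 ≤ 0 := by
        rw [hQdef] at hQ0; linarith
      have hpos : 0 < A*C + q*B := by positivity
      nlinarith [sq_nonneg (A*z1 - B*z2)]
    left
    have : A*z1 - B*z2 = 0 := by
      exact pow_eq_zero_iff (n := 2) (by norm_num) |>.mp hsq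
    field_simp
    linarith
end

section
/- Let s, d, a, Tmax, β, α, ρ, δ, q, c, k1 be positive real numbers with qβ > (δ+ρ)·k1, let T0 = (Tmax/(2a))·((a − d) + √((a − d)² + 4as/Tmax)), and assume (qβ − (δ+ρ)·k1)·T0 > c·(δ+ρ). Let T, I, V : ℝ → ℝ be differentiable functions, positive on [0, ∞), satisfying for all t ≥ 0: T'(t) = s − d·T(t) + a·T(t)·(1 − T(t)/Tmax) − β·T(t)·V(t)/(1 + α·V(t)) + ρ·I(t), I'(t) = β·T(t)·V(t)/(1 + α·V(t)) − (δ+ρ)·I(t), V'(t) = q·I(t) − c·V(t) − k1·V(t)·T(t). Then there exists ε > 0 such that liminf_{t→∞} T(t) ≥ ε, liminf_{t→∞} I(t) ≥ ε and liminf_{t→∞} V(t) ≥ ε; that is, the system is permanent. -/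
open Set Filter


lemma deriv_pos_right {f : ℝ → ℝ} {u t₁ : ℝ} (hf : DifferentiableAt ℝ f u)
    (h : 0 < deriv f u) (hu : u < t₁) : ∃ t, t ∈ Set.Ioc u t₁ ∧ f u < f t := by
  have hs : Tendsto (slope f u) (nhdsWithin u {u}ᶜ) (nhds (deriv f u)) :=
    hasDerivAt_iff_tendsto_slope.1 hf.hasDerivAt
  have h1 : ∀ᶠ t in nhdsWithin u {u}ᶜ, 0 < slope f u t :=
    hs.eventually (eventually_gt_nhds h)
  have h2 : ∀ᶠ t in nhdsWithin u (Set.Ioi u), 0 < slope f u t :=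
    h1.filter_mono (nhdsWithin_mono u (fun x hx => ne_of_gt hx))
  have h3 : Set.Ioc u t₁ ∈ nhdsWithin u (Set.Ioi u) := Ioc_mem_nhdsGT hu
  obtain ⟨t, ht, hmem⟩ := (h2.and (eventually_of_mem h3 (fun x hx => hx))).exists
  refine ⟨t, hmem, ?_⟩
  have htu : 0 < t - u := by linarith [hmem.1]
  rw [slope_def_field] at ht
  have h4 : 0 < f t - f u := by
    have h5 := mul_pos ht htu
    rwa [div_mul_cancel₀ _ (ne_of_gt htu)] at h5
  linarith

lemma barrier {f : ℝ → ℝ} (hf : Differentiable ℝ f) {t₀ t₂ b : ℝ}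
    (h0 : b ≤ f t₀)
    (hd : ∀ t, t ∈ Set.Icc t₀ t₂ → f t ≤ b → 0 < deriv f t) :
    ∀ t ∈ Set.Icc t₀ t₂, b ≤ f t := by
  intro t₁ ht₁
  by_contra hlt
  push_neg at hlt
  set S : Set ℝ := Set.Icc t₀ t₁ ∩ {t | b ≤ f t} with hS
  have hne : S.Nonempty := ⟨t₀, ⟨le_refl _, ht₁.1⟩, h0⟩
  have hbdd : BddAbove S := ⟨t₁, fun x hx => hx.1.2⟩
  have hclosed : IsClosed S :=
    isClosed_Icc.inter (isClosed_le continuous_const hf.continuous)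
  have huS : sSup S ∈ S := hclosed.csSup_mem hne hbdd
  set u := sSup S with hu
  have hub : b ≤ f u := huS.2
  have hult : u < t₁ := by
    rcases eq_or_lt_of_le huS.1.2 with h | h
    · exact absurd (h ▸ hub) (not_le.2 hlt)
    · exact h
  -- all points in (u, t₁] have f < b
  have hafter : ∀ t, t ∈ Set.Ioc u t₁ → f t < b := by
    intro t ht
    by_contra hge
    push_neg at hge
    have : t ∈ S := ⟨⟨le_trans huS.1.1 (le_of_lt ht.1), ht.2⟩, hge⟩
    exact absurd (le_csSup hbdd this) (not_le.2 ht.1)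
  -- hence f u = b
  have hfu : f u = b := by
    rcases eq_or_lt_of_le hub with h | h
    · exact h.symm
    · -- f u > b, by continuity f > b just after u, contradiction
      have hcont : ContinuousAt f u := hf.continuous.continuousAt
      have hev : ∀ᶠ t in nhdsWithin u (Set.Ioi u), b < f t :=
        (hcont.eventually (eventually_gt_nhds h)).filter_mono nhdsWithin_le_nhds
      have h3 : Set.Ioc u t₁ ∈ nhdsWithin u (Set.Ioi u) := Ioc_mem_nhdsGT hult
      obtain ⟨t, ht, hmem⟩ := (hev.and (eventually_of_mem h3 (fun x hx => hx))).exists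
      exact absurd (hafter t hmem) (not_lt.2 (le_of_lt ht))
  have hderiv : 0 < deriv f u :=
    hd u ⟨huS.1.1, le_trans huS.1.2 ht₁.2⟩ (le_of_eq hfu)
  obtain ⟨t, hmem, hgt⟩ := deriv_pos_right (hf u) hderiv hult
  exact absurd (hafter t hmem) (not_lt.2 (le_of_lt (hfu ▸ hgt)))

lemma mono_aux {f : ℝ → ℝ} (hf : Differentiable ℝ f) {x y : ℝ}
    (h : ∀ t ∈ Set.Icc x y, 0 ≤ deriv f t) : MonotoneOn f (Set.Icc x y) :=
  monotoneOn_of_deriv_nonneg (convex_Icc x y) hf.continuous.continuousOn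
    (fun t _ => (hf t).differentiableWithinAt)
    (fun t ht => h t (interior_subset ht))

/-- linear growth: deriv ≥ r on [x,y] implies f y - f x ≥ r (y - x) -/
lemma growth {f : ℝ → ℝ} (hf : Differentiable ℝ f) {x y r : ℝ} (hxy : x ≤ y)
    (h : ∀ t ∈ Set.Icc x y, r ≤ deriv f t) : f x + r * (y - x) ≤ f y := by
  have hg : Differentiable ℝ (fun t => f t - r * t) :=
    hf.sub ((differentiable_id.const_mul r))
  have hgd : ∀ t ∈ Set.Icc x y, 0 ≤ deriv (fun t => f t - r * t) t := by
    intro t ht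
    have hd2 : HasDerivAt (fun t => f t - r * t) (deriv f t - r * 1) t :=
      (hf t).hasDerivAt.sub ((hasDerivAt_id t).const_mul r)
    rw [hd2.deriv]; linarith [h t ht]
  have := mono_aux hg hgd (Set.left_mem_Icc.2 hxy) (Set.right_mem_Icc.2 hxy) hxy
  simp only at this
  linarith

/-- exponentially weighted monotonicity: if deriv f ≥ -Γ f on [x,y] then
f x * exp(Γ x) ≤ f y * exp(Γ y). -/
lemma exp_mono {f : ℝ → ℝ} (hf : Differentiable ℝ f) {x y Γ : ℝ} (hxy : x ≤ y)
    (h : ∀ t ∈ Set.Icc x y, -(Γ * f t) ≤ deriv f t) :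
    f x * Real.exp (Γ * x) ≤ f y * Real.exp (Γ * y) := by
  have he : Differentiable ℝ (fun t : ℝ => Real.exp (Γ * t)) :=
    (Real.differentiable_exp.comp (differentiable_id.const_mul Γ))
  have hg : Differentiable ℝ (fun t => f t * Real.exp (Γ * t)) := hf.mul he
  have hgd : ∀ t ∈ Set.Icc x y, 0 ≤ deriv (fun t => f t * Real.exp (Γ * t)) t := by
    intro t ht
    have hde : deriv (fun t : ℝ => Real.exp (Γ * t)) t = Γ * Real.exp (Γ * t) := by
      have h0 : HasDerivAt (fun t : ℝ => Γ * t) (Γ * 1) t := (hasDerivAt_id t).const_mul Γ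
      have : HasDerivAt (fun t : ℝ => Real.exp (Γ * t)) (Real.exp (Γ * t) * (Γ * 1)) t :=
        (Real.hasDerivAt_exp (Γ * t)).comp t h0
      rw [this.deriv]; ring
    rw [deriv_fun_mul (hf t) (he t), hde]
    have h1 := h t ht
    have h2 := Real.exp_pos (Γ * t)
    nlinarith
  exact mono_aux hg hgd (Set.left_mem_Icc.2 hxy) (Set.right_mem_Icc.2 hxy) hxy

/-- climb to the level b by time t₀ + H/r and stay above until t₂. -/
lemma reach_stay {f : ℝ → ℝ} (hf : Differentiable ℝ f) {t₀ t₂ b r H : ℝ}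
    (hr : 0 < r) (hH : 0 ≤ H) (hb : b ≤ f t₀ + H) (ht : t₀ + H / r ≤ t₂)
    (hd : ∀ t, t ∈ Set.Icc t₀ t₂ → f t ≤ b → r ≤ deriv f t) :
    ∀ t ∈ Set.Icc (t₀ + H / r) t₂, b ≤ f t := by
  have hHr : 0 ≤ H / r := div_nonneg hH (le_of_lt hr)
  have hreach : ∃ t', t' ∈ Set.Icc t₀ (t₀ + H / r) ∧ b ≤ f t' := by
    by_contra hno
    push_neg at hno
    have hall : ∀ t ∈ Set.Icc t₀ (t₀ + H / r), r ≤ deriv f t := by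
      intro t htm
      exact hd t ⟨htm.1, le_trans htm.2 ht⟩ (le_of_lt (hno t htm))
    have := growth hf (by linarith) hall
    have : f t₀ + H ≤ f (t₀ + H / r) := by
      have hrH : r * (t₀ + H / r - t₀) = H := by field_simp; ring
      linarith [hrH ▸ this]
    exact absurd (hno (t₀ + H / r) ⟨by linarith, le_refl _⟩) (not_lt.2 (by linarith))
  obtain ⟨t', ht', hbt'⟩ := hreach
  have hstay := barrier hf hbt' (t₂ := t₂)
    (fun t htm hftb => lt_of_lt_of_le hr (hd t ⟨le_trans ht'.1 htm.1, htm.2⟩ hftb))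
  intro t htm
  exact hstay t ⟨le_trans ht'.2 htm.1, htm.2⟩

lemma exp_mono_bound {f : ℝ → ℝ} (hf : Differentiable ℝ f) {x y Γ b : ℝ} (hxy : x ≤ y)
    (hb : b ≤ f x) (h : ∀ t ∈ Set.Icc x y, -(Γ * f t) ≤ deriv f t) :
    b * Real.exp (-(Γ*(y-x))) ≤ f y := by
  have hm := exp_mono hf hxy h
  have h1 : b * Real.exp (Γ*x) ≤ f y * Real.exp (Γ*y) :=
    le_trans (mul_le_mul_of_nonneg_right hb (Real.exp_pos _).le) hm
  have h2 : b * Real.exp (-(Γ*(y-x))) * Real.exp (Γ*y) = b * Real.exp (Γ*x) := by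
    rw [mul_assoc, ← Real.exp_add]
    have e : -(Γ*(y-x)) + Γ*y = Γ*x := by ring
    rw [e]
  exact le_of_mul_le_mul_right (by rw [h2]; exact h1) (Real.exp_pos _)

lemma exp_grow_bound {f : ℝ → ℝ} (hf : Differentiable ℝ f) {x y σ b : ℝ} (hxy : x ≤ y)
    (hb : b ≤ f x) (h : ∀ t ∈ Set.Icc x y, σ * f t ≤ deriv f t) :
    b * Real.exp (σ*(y-x)) ≤ f y := by
  have h0 := exp_mono_bound hf (Γ := -σ) hxy hb (by
    intro t htm
    have e : -(-σ * f t) = σ * f t := by ring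
    rw [e]; exact h t htm)
  have e2 : -(-σ*(y-x)) = σ*(y-x) := by ring
  rwa [e2] at h0
set_option maxHeartbeats 4000000 in
theorem stmt_11 (s d a Tmax β α ρ δ q c k1 : ℝ)
    (hs : 0 < s) (hd : 0 < d) (ha : 0 < a) (hTmax : 0 < Tmax) (hβ : 0 < β)
    (hα : 0 < α) (hρ : 0 < ρ) (hδ : 0 < δ) (hq : 0 < q) (hc : 0 < c) (hk1 : 0 < k1)
    (hqβ : q*β > (δ+ρ)*k1)
    (T0 : ℝ)
    (hT0 : T0 = (Tmax/(2*a)) * ((a - d) + Real.sqrt ((a - d)^2 + 4*a*s/Tmax)))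
    (hR0 : (q*β - (δ+ρ)*k1) * T0 > c*(δ+ρ))
    (T I V : ℝ → ℝ)
    (hTdiff : Differentiable ℝ T) (hIdiff : Differentiable ℝ I)
    (hVdiff : Differentiable ℝ V)
    (hTpos : ∀ t ≥ (0:ℝ), 0 < T t) (hIpos : ∀ t ≥ (0:ℝ), 0 < I t)
    (hVpos : ∀ t ≥ (0:ℝ), 0 < V t)
    (hT : ∀ t ≥ (0:ℝ), deriv T t =
      s - d * T t + a * T t * (1 - T t / Tmax) - β * T t * V t / (1 + α * V t) + ρ * I t)
    (hI : ∀ t ≥ (0:ℝ), deriv I t =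
      β * T t * V t / (1 + α * V t) - (δ + ρ) * I t)
    (hV : ∀ t ≥ (0:ℝ), deriv V t = q * I t - c * V t - k1 * V t * T t) :
    ∃ ε : ℝ, 0 < ε ∧
      ε ≤ Filter.liminf T Filter.atTop ∧
      ε ≤ Filter.liminf I Filter.atTop ∧
      ε ≤ Filter.liminf V Filter.atTop := by
  -- basic positivity facts
  have hden : ∀ t, 0 ≤ t → (0:ℝ) < 1 + α * V t := fun t ht => by nlinarith [hVpos t ht]
  -- the square root and the negative root
  obtain ⟨S, hSdef⟩ : ∃ S : ℝ, S = Real.sqrt ((a - d)^2 + 4*a*s/Tmax) := ⟨_, rfl⟩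
  rw [← hSdef] at hT0
  obtain ⟨Tneg, hTnegdef⟩ : ∃ x : ℝ, x = (Tmax/(2*a)) * ((a - d) - S) := ⟨_, rfl⟩
  have hrad : (0:ℝ) ≤ (a - d)^2 + 4*a*s/Tmax := by positivity
  have hS2 : S^2 = (a - d)^2 + 4*a*s/Tmax := by rw [hSdef]; exact Real.sq_sqrt hrad
  have hSnn : 0 ≤ S := by rw [hSdef]; exact Real.sqrt_nonneg _
  have h4as : (0:ℝ) < 4*a*s/Tmax := by positivity
  have hT0pos : 0 < T0 := by
    rw [hT0]; have h1 : 0 < (a - d) + S := by nlinarith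
    positivity
  have hTnegneg : Tneg < 0 := by
    rw [hTnegdef]
    have h2 : (a - d) - S < 0 := by nlinarith
    have : 0 < Tmax/(2*a) := by positivity
    nlinarith
  have hfact : ∀ x : ℝ, s - d*x + a*x*(1 - x/Tmax) = (a/Tmax) * (T0 - x) * (x - Tneg) := by
    intro x
    rw [hT0, hTnegdef]
    have hS2' : Tmax * S^2 = Tmax*(a-d)^2 + 4*a*s := by
      rw [hS2]; field_simp
    have hT' : Tmax ≠ 0 := ne_of_gt hTmax
    have haa : a ≠ 0 := ne_of_gt ha
    field_simp
    linear_combination (-Tmax) * hS2'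
  -- global upper bound B for T and I
  obtain ⟨C, hCdef⟩ : ∃ x : ℝ, x = s + Tmax*(a+δ)^2/(4*a) := ⟨_, rfl⟩
  obtain ⟨B, hBdef⟩ : ∃ x : ℝ, x = max (T 0 + I 0) (C/δ) + 1 := ⟨_, rfl⟩
  have hCpos : 0 < C := by rw [hCdef]; positivity
  have hBpos : 0 < B := by
    rw [hBdef]
    have : C/δ ≤ max (T 0 + I 0) (C/δ) := le_max_right _ _
    have : 0 < C/δ := by positivity
    linarith [le_max_right (T 0 + I 0) (C/δ)]
  have hquad : ∀ x : ℝ, 0 ≤ x → -(d*x) + a*x*(1-x/Tmax) + δ*x ≤ Tmax*(a+δ)^2/(4*a) := by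
    intro x hx
    have step : (a+δ)*x - a*x^2/Tmax ≤ Tmax*(a+δ)^2/(4*a) := by
      rw [← sub_nonneg]
      have hid : Tmax*(a+δ)^2/(4*a) - ((a+δ)*x - a*x^2/Tmax)
          = (Tmax*(a+δ) - 2*a*x)^2/(4*a*Tmax) := by field_simp; ring
      rw [hid]; positivity
    have hdx : 0 ≤ d*x := mul_nonneg hd.le hx
    have e : -(d*x) + a * x * (1 - x / Tmax) + δ*x = ((a + δ) * x - a * x ^ 2 / Tmax) - d*x := by
      ring
    rw [e]; linarith only [step, hdx]
  have hNub : ∀ t, 0 ≤ t → T t + I t ≤ B := by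
    have hNdiff : Differentiable ℝ (fun t => -(T t + I t)) := (hTdiff.add hIdiff).neg
    intro u hu
    have h0 : -B ≤ (fun t => -(T t + I t)) 0 := by
      simp only [neg_le_neg_iff]
      rw [hBdef]; linarith [le_max_left (T 0 + I 0) (C/δ)]
    have hdcond : ∀ t, t ∈ Set.Icc (0:ℝ) u → (fun t => -(T t + I t)) t ≤ -B →
        0 < deriv (fun t => -(T t + I t)) t := by
      intro t ht hle
      replace hle : -(T t + I t) ≤ -B := hle
      have ht0 : (0:ℝ) ≤ t := ht.1
      have hdN : deriv (fun t => -(T t + I t)) t = -(deriv T t + deriv I t) := by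
        have h1 : HasDerivAt (fun t => -(T t + I t)) (-(deriv T t + deriv I t)) t :=
          ((hTdiff t).hasDerivAt.add (hIdiff t).hasDerivAt).neg
        exact h1.deriv
      rw [hdN]
      have hTt := hTpos t ht0
      have hIt := hIpos t ht0
      have hNB : B ≤ T t + I t := by linarith
      have heq : deriv T t + deriv I t = s - d*T t + a*T t*(1 - T t/Tmax) - δ*I t := by
        rw [hT t ht0, hI t ht0]; ring
      have hderivN : deriv T t + deriv I t ≤ C - δ * (T t + I t) := by
        rw [heq, hCdef]
        have e2 : s - d*T t + a*T t*(1 - T t/Tmax) - δ*I t =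
            (-(d * T t) + a * T t * (1 - T t / Tmax) + δ * T t) + s - δ*(T t + I t) := by ring
        rw [e2]
        linarith only [hquad (T t) hTt.le]
      have hBC : C/δ + 1 ≤ B := by
        rw [hBdef]; linarith [le_max_right (T 0 + I 0) (C/δ)]
      have h2 : δ * B ≤ δ * (T t + I t) := mul_le_mul_of_nonneg_left hNB hδ.le
      have h3 : δ * (C/δ + 1) ≤ δ * B := mul_le_mul_of_nonneg_left hBC hδ.le
      have h4 : δ * (C/δ) = C := by field_simp
      linarith
    have := barrier hNdiff h0 hdcond u ⟨hu, le_refl u⟩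
    simp only [neg_le_neg_iff] at this
    linarith
  have hTub : ∀ t, 0 ≤ t → T t ≤ B := fun t ht => by linarith [hNub t ht, hIpos t ht]
  have hIub : ∀ t, 0 ≤ t → I t ≤ B := fun t ht => by linarith [hNub t ht, hTpos t ht]
  -- global upper bound for V
  obtain ⟨BV, hBVdef⟩ : ∃ x : ℝ, x = max (V 0) (q*B/c) + 1 := ⟨_, rfl⟩
  have hBVpos : 0 < BV := by
    rw [hBVdef]
    have h1 : 0 < q*B/c := by positivity
    linarith [le_max_right (V 0) (q*B/c)]
  have hVub : ∀ t, 0 ≤ t → V t ≤ BV := by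
    have hVdiff' : Differentiable ℝ (fun t => -(V t)) := hVdiff.neg
    intro u hu
    have h0 : -BV ≤ (fun t => -(V t)) 0 := by
      simp only [neg_le_neg_iff]
      rw [hBVdef]; linarith [le_max_left (V 0) (q*B/c)]
    have hdcond : ∀ t, t ∈ Set.Icc (0:ℝ) u → (fun t => -(V t)) t ≤ -BV →
        0 < deriv (fun t => -(V t)) t := by
      intro t ht hle
      replace hle : -(V t) ≤ -BV := hle
      replace hle : BV ≤ V t := by linarith
      have ht0 : (0:ℝ) ≤ t := ht.1
      have hdN : deriv (fun t => -(V t)) t = -(deriv V t) := by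
        exact ((hVdiff t).hasDerivAt.neg).deriv
      rw [hdN, hV t ht0]
      have h1 : q * I t ≤ q * B := mul_le_mul_of_nonneg_left (hIub t ht0) hq.le
      have h2 : 0 ≤ k1 * V t * T t := by
        have := hVpos t ht0; have := hTpos t ht0; positivity
      have h3 : c * (q*B/c + 1) ≤ c * V t := by
        apply mul_le_mul_of_nonneg_left _ hc.le
        rw [hBVdef] at hle; linarith [le_max_right (V 0) (q*B/c)]
      have h4 : c * (q*B/c) = q*B := by field_simp
      linarith
    have := barrier hVdiff' h0 hdcond u ⟨hu, le_refl u⟩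
    simp only [neg_le_neg_iff] at this
    linarith
  -- eventual lower bound for T
  obtain ⟨K, hKdef⟩ : ∃ x : ℝ, x = d + β/α + a/Tmax := ⟨_, rfl⟩
  have hKpos : 0 < K := by rw [hKdef]; positivity
  obtain ⟨ε₁, hε₁def⟩ : ∃ x : ℝ, x = min 1 (s/(2*K)) := ⟨_, rfl⟩
  have hε₁pos : 0 < ε₁ := by
    rw [hε₁def]; exact lt_min one_pos (by positivity)
  have hε₁1 : ε₁ ≤ 1 := by rw [hε₁def]; exact min_le_left _ _
  have hKε₁ : K * ε₁ ≤ s/2 := by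
    have h1 : ε₁ ≤ s/(2*K) := by rw [hε₁def]; exact min_le_right _ _
    rw [le_div_iff₀ (by positivity)] at h1; linarith
  have hTclimbcond : ∀ u : ℝ, ∀ t, t ∈ Set.Icc (0:ℝ) u → T t ≤ ε₁ → s/2 ≤ deriv T t := by
    intro u t ht hTle
    have ht0 : (0:ℝ) ≤ t := ht.1
    have hTt := hTpos t ht0
    have hIt := hIpos t ht0
    have hVt := hVpos t ht0
    have hdent := hden t ht0
    rw [hT t ht0]
    have hF : β * T t * V t / (1 + α * V t) ≤ (β/α) * T t := by
      rw [div_le_iff₀ hdent]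
      have e : (β/α) * T t * (1 + α * V t) = (β/α)*T t + β * T t * V t * (α/α) := by ring
      rw [e, div_self (ne_of_gt hα)]
      have : 0 ≤ (β/α) * T t := by positivity
      linarith
    have hAq : a*T t*(1 - T t/Tmax) = a*T t - (a/Tmax)*(T t)^2 := by ring
    have hsq : (a/Tmax)*(T t)^2 ≤ (a/Tmax)*ε₁ := by
      have h2 : (T t)^2 ≤ ε₁ := by
        rw [sq]
        have ha1 : T t * T t ≤ ε₁ * ε₁ := mul_le_mul hTle hTle hTt.le hε₁pos.le
        have ha2 : ε₁ * ε₁ ≤ ε₁ * 1 := mul_le_mul_of_nonneg_left hε₁1 hε₁pos.le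
        linarith only [ha1, ha2]
      exact mul_le_mul_of_nonneg_left h2 (by positivity)
    have h5 : d * T t ≤ d * ε₁ := mul_le_mul_of_nonneg_left hTle hd.le
    have h6 : (β/α) * T t ≤ (β/α) * ε₁ := mul_le_mul_of_nonneg_left hTle (by positivity)
    have h7 : 0 ≤ ρ * I t := by positivity
    have h8 : 0 ≤ a * T t := by positivity
    have hKe : K * ε₁ = d*ε₁ + (β/α)*ε₁ + (a/Tmax)*ε₁ := by rw [hKdef]; ring
    linarith
  have hTlow : ∀ t, ε₁/(s/2) ≤ t → ε₁ ≤ T t := by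
    intro u hu
    have h := reach_stay (t₀ := (0:ℝ)) (t₂ := u) hTdiff (by positivity : (0:ℝ) < s/2)
      hε₁pos.le (by linarith [hTpos 0 (le_refl (0:ℝ))]) (by linarith)
      (hTclimbcond u)
    have := h u ⟨by linarith, le_refl u⟩
    linarith
  -- constants for the persistence argument
  have hcktpos : 0 < c + k1*T0 := by positivity
  obtain ⟨η, hηdef⟩ : ∃ x:ℝ, x = ((δ+ρ)/q + β*T0/(c+k1*T0))/2 := ⟨_, rfl⟩
  have hηpos : 0 < η := by rw [hηdef]; positivity
  have hR0' : (δ+ρ)*(c+k1*T0) < q*β*T0 := by linarith only [hR0]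
  have hηq : (δ+ρ) < η*q := by
    have hG1 : (δ+ρ) < q*β*T0/(c+k1*T0) := by
      rw [lt_div_iff₀ hcktpos]; linarith [hR0']
    have he : η*q = (δ+ρ)/2 + (q*β*T0/(c+k1*T0))/2 := by
      rw [hηdef]; field_simp
    linarith
  obtain ⟨A, hAdef⟩ : ∃ x:ℝ, x = β*T0 - η*(c+k1*T0) := ⟨_, rfl⟩
  have hApos : 0 < A := by
    have he : A = (q*β*T0 - (δ+ρ)*(c+k1*T0))/(2*q) := by
      rw [hAdef, hηdef]; field_simp; ring
    rw [he]
    apply div_pos (by linarith [hR0']) (by positivity)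
  obtain ⟨ε2, hε2def⟩ : ∃ x:ℝ, x = min (T0/2) (A/(4*β)) := ⟨_, rfl⟩
  have hε2pos : 0 < ε2 := by rw [hε2def]; exact lt_min (by positivity) (by positivity)
  have hε2T0 : ε2 ≤ T0/2 := by rw [hε2def]; exact min_le_left _ _
  have hε2A : ε2 ≤ A/(4*β) := by rw [hε2def]; exact min_le_right _ _
  have hT0ε2 : 0 < T0 - ε2 := by linarith
  obtain ⟨μ, hμdef⟩ : ∃ x:ℝ, x = (a/Tmax)*ε2*(-Tneg) := ⟨_, rfl⟩
  have hμpos : 0 < μ := by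
    rw [hμdef]
    have h1 : 0 < -Tneg := by linarith
    have h2 : 0 < (a/Tmax)*ε2 := by positivity
    exact mul_pos h2 h1
  obtain ⟨vb, hvbdef⟩ : ∃ x:ℝ, x = min (A/(4*T0*β*α)) (μ/(2*β*B)) := ⟨_, rfl⟩
  have hvbpos : 0 < vb := by
    rw [hvbdef]
    exact lt_min (by positivity) (by positivity)
  have hvb1 : vb ≤ A/(4*T0*β*α) := by rw [hvbdef]; exact min_le_left _ _
  have hvb2 : vb ≤ μ/(2*β*B) := by rw [hvbdef]; exact min_le_right _ _
  obtain ⟨lam, hlamdef⟩ : ∃ x:ℝ, x = η*vb := ⟨_, rfl⟩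
  have hlampos : 0 < lam := by rw [hlamdef]; exact mul_pos hηpos hvbpos
  obtain ⟨Γ, hΓdef⟩ : ∃ x:ℝ, x = max (δ+ρ) (c + k1*B) := ⟨_, rfl⟩
  have hΓ1 : δ+ρ ≤ Γ := by rw [hΓdef]; exact le_max_left _ _
  have hΓ2 : c + k1*B ≤ Γ := by rw [hΓdef]; exact le_max_right _ _
  have hΓpos : 0 < Γ := lt_of_lt_of_le (by linarith) hΓ1
  obtain ⟨D, hDdef⟩ : ∃ x:ℝ, x = T0/(μ/2) := ⟨_, rfl⟩
  have hDpos : 0 < D := by rw [hDdef]; positivity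
  obtain ⟨σ, hσdef⟩ : ∃ x:ℝ, x = min (η*q - (δ+ρ)) (A/(2*η)) := ⟨_, rfl⟩
  have hσpos : 0 < σ := by
    rw [hσdef]; exact lt_min (by linarith) (by positivity)
  have hσ1 : σ ≤ η*q - (δ+ρ) := by rw [hσdef]; exact min_le_left _ _
  have hσ2 : σ*η ≤ A/2 := by
    have h1 : σ ≤ A/(2*η) := by rw [hσdef]; exact min_le_right _ _
    rw [le_div_iff₀ (by positivity)] at h1; linarith
  obtain ⟨lb, hlbdef⟩ : ∃ x:ℝ, x = lam * Real.exp (-(Γ*(2*D))) := ⟨_, rfl⟩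
  have hlbpos : 0 < lb := by rw [hlbdef]; positivity
  have hlblam : lb < lam := by
    rw [hlbdef]
    have h1 : Real.exp (-(Γ*(2*D))) < 1 := by
      rw [Real.exp_lt_one_iff]
      have : 0 < Γ*(2*D) := by positivity
      linarith
    have h2 := mul_lt_mul_of_pos_left h1 hlampos
    simpa using h2
  -- the function L = I + η V
  obtain ⟨L, hLdef⟩ : ∃ L : ℝ → ℝ, L = fun t => I t + η * V t := ⟨_, rfl⟩
  have hLt : ∀ t, L t = I t + η * V t := fun t => by rw [hLdef]
  have hLdiff : Differentiable ℝ L := by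
    rw [hLdef]; exact hIdiff.add (hVdiff.const_mul η)
  have hLpos : ∀ t, 0 ≤ t → 0 < L t := by
    intro t ht
    rw [hLt]
    have := hIpos t ht; have := hVpos t ht
    positivity
  have hLderiv : ∀ t, 0 ≤ t → deriv L t =
      β * T t * V t / (1 + α * V t) - (δ + ρ) * I t + η*(q * I t - c * V t - k1 * V t * T t) := by
    intro t ht
    have h1 : HasDerivAt L (deriv I t + η * deriv V t) t := by
      rw [hLdef]
      exact (hIdiff t).hasDerivAt.add ((hVdiff t).hasDerivAt.const_mul η)
    rw [h1.deriv, hI t ht, hV t ht]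
  -- L decays at most exponentially
  have hLlow : ∀ t, 0 ≤ t → -(Γ * L t) ≤ deriv L t := by
    intro t ht
    have hIt := hIpos t ht; have hVt := hVpos t ht; have hTt := hTpos t ht
    have hdent := hden t ht
    rw [hLderiv t ht, hLt]
    have hF : 0 ≤ β * T t * V t / (1 + α * V t) := by positivity
    have h1 : (δ+ρ) * I t ≤ Γ * I t := mul_le_mul_of_nonneg_right hΓ1 hIt.le
    have h2' : c * V t + k1 * V t * T t ≤ Γ * V t := by
      have e : c * V t + k1 * V t * T t = (c + k1 * T t) * V t := by ring
      rw [e]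
      apply mul_le_mul_of_nonneg_right _ hVt.le
      have := mul_le_mul_of_nonneg_left (hTub t ht) hk1.le
      linarith
    have h3 : η*(c * V t + k1 * V t * T t) ≤ η*(Γ * V t) :=
      mul_le_mul_of_nonneg_left h2' hηpos.le
    have h4 : 0 ≤ η*(q * I t) := by positivity
    linarith only [h3, h1, hF, h4]
  -- the V-coefficient estimate
  obtain ⟨w, hwdef⟩ : ∃ x:ℝ, x = 1 + α*vb := ⟨_, rfl⟩
  have hwpos : 0 < w := by rw [hwdef]; positivity
  have hinv : β - β*α*vb ≤ β/w := by
    rw [le_div_iff₀ hwpos]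
    have e : (β - β*α*vb)*w = β - β*(α*vb)^2 := by rw [hwdef]; ring
    rw [e]
    have h0 : 0 ≤ β*(α*vb)^2 := by positivity
    linarith
  have hβT0A : β*T0 - η*k1*T0 = A + η*c := by rw [hAdef]; ring
  have p1 : ε2*β ≤ A/4 := by
    have h := hε2A
    rw [le_div_iff₀ (by positivity : (0:ℝ) < 4*β)] at h
    linarith
  have p2 : T0*β*α*vb ≤ A/4 := by
    have h := hvb1
    rw [le_div_iff₀ (by positivity : (0:ℝ) < 4*T0*β*α)] at h
    linarith
  have hcoef : σ*η + η*c ≤ (T0-ε2)*(β/w - η*k1) := by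
    have step1 : (T0-ε2)*(β - β*α*vb - η*k1) ≤ (T0-ε2)*(β/w - η*k1) :=
      mul_le_mul_of_nonneg_left (by linarith) hT0ε2.le
    have q1 : 0 ≤ ε2*(β*(α*vb)) := by positivity
    have q2 : 0 ≤ ε2*(η*k1) := by positivity
    have step2 : A/2 + η*c ≤ (T0-ε2)*(β - β*α*vb - η*k1) := by
      have e : (T0-ε2)*(β - β*α*vb - η*k1) =
          (β*T0 - η*k1*T0) - T0*β*α*vb - ε2*β + ε2*(β*(α*vb)) + ε2*(η*k1) := by ring
      rw [e, hβT0A]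
      linarith only [p1, p2, q1, q2]
    linarith only [step1, step2, hσ2]
  have hP : 0 ≤ β/w - η*k1 := by
    by_contra hcon
    push_neg at hcon
    have h1 : (T0-ε2)*(β/w - η*k1) < 0 := mul_neg_of_pos_of_neg hT0ε2 hcon
    have h2 : 0 < σ*η + η*c := by positivity
    linarith only [h1, h2, hcoef]
  -- L grows when T is near T0 and V is small
  have hLgrow : ∀ t, 0 ≤ t → T0 - ε2 ≤ T t → V t ≤ vb → σ * L t ≤ deriv L t := by
    intro t ht hTge hVle
    have hIt := hIpos t ht
    have hVt := hVpos t ht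
    have hTt := hTpos t ht
    have hdent := hden t ht
    rw [hLderiv t ht, hLt]
    have hFlow : β*T t*V t/w ≤ β*T t*V t/(1+α*V t) := by
      rw [div_le_div_iff₀ hwpos hdent]
      apply mul_le_mul_of_nonneg_left _ (by positivity : 0 ≤ β*T t*V t)
      rw [hwdef]
      have := mul_le_mul_of_nonneg_left hVle hα.le
      linarith
    have hcV : σ*η + η*c ≤ (β/w - η*k1)*T t := by
      have h3 : (β/w - η*k1)*(T0-ε2) ≤ (β/w - η*k1)*T t :=
        mul_le_mul_of_nonneg_left hTge hP
      calc σ*η + η*c ≤ (T0-ε2)*(β/w - η*k1) := hcoef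
        _ = (β/w - η*k1)*(T0-ε2) := by ring
        _ ≤ (β/w - η*k1)*T t := h3
    have hIc : σ*I t ≤ (η*q - (δ+ρ))*I t :=
      mul_le_mul_of_nonneg_right (by linarith only [hσ1]) hIt.le
    have hVc : (σ*η)*V t ≤ β*T t*V t/w - η*(k1*V t*T t) - η*(c*V t) := by
      have h := mul_le_mul_of_nonneg_right (by linarith only [hcV] :
        σ*η ≤ (β/w - η*k1)*T t - η*c) hVt.le
      calc (σ*η)*V t ≤ ((β/w - η*k1)*T t - η*c)*V t := h
        _ = β*T t*V t/w - η*(k1*V t*T t) - η*(c*V t) := by ring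
    have hIc2 : (δ+ρ)*I t - η*(q*I t) ≤ -(σ*I t) := by linarith only [hIc]
    linarith only [hFlow, hIc2, hVc]
  -- T climbs whenever V stays small
  have hTclimb2 : ∀ t, 0 ≤ t → V t ≤ vb → T t ≤ T0 - ε2 → μ/2 ≤ deriv T t := by
    intro t ht hVle hTle
    have hTt := hTpos t ht
    have hVt := hVpos t ht
    have hIt := hIpos t ht
    have hdent := hden t ht
    rw [hT t ht]
    have hg : μ ≤ s - d*T t + a*T t*(1 - T t/Tmax) := by
      rw [hfact (T t), hμdef]
      have h1 : ε2 ≤ T0 - T t := by linarith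
      have h2 : -Tneg ≤ T t - Tneg := by linarith
      have haT : (0:ℝ) < a/Tmax := by positivity
      have key : ε2*(-Tneg) ≤ (T0 - T t)*(T t - Tneg) := by
        have k1' : ε2*(-Tneg) ≤ (T0 - T t)*(-Tneg) :=
          mul_le_mul_of_nonneg_right h1 (by linarith)
        have k2' : (T0 - T t)*(-Tneg) ≤ (T0 - T t)*(T t - Tneg) :=
          mul_le_mul_of_nonneg_left h2 (by linarith)
        linarith
      calc a/Tmax*ε2*(-Tneg) = (a/Tmax)*(ε2*(-Tneg)) := by ring
        _ ≤ (a/Tmax)*((T0 - T t)*(T t - Tneg)) := mul_le_mul_of_nonneg_left key haT.le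
        _ = a/Tmax*(T0 - T t)*(T t - Tneg) := by ring
    have hF : β*T t*V t/(1+α*V t) ≤ μ/2 := by
      have hαV : 0 ≤ α * V t := by positivity
      have h1 : β*T t*V t/(1+α*V t) ≤ β*T t*V t :=
        div_le_self (by positivity) (by linarith)
      have h2 : β*T t*V t ≤ β*B*vb := by
        calc β*T t*V t ≤ β*T t*vb := mul_le_mul_of_nonneg_left hVle (by positivity)
          _ ≤ β*B*vb := mul_le_mul_of_nonneg_right
              (mul_le_mul_of_nonneg_left (hTub t ht) hβ.le) hvbpos.le
      have h3 : β*B*vb ≤ μ/2 := by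
        have h := hvb2
        rw [le_div_iff₀ (by positivity : (0:ℝ) < 2*β*B)] at h
        linarith
      linarith
    have h7 : 0 ≤ ρ*I t := by positivity
    linarith only [hg, hF, h7]
  -- V is small whenever L is small
  have hVsm : ∀ t, 0 ≤ t → L t ≤ lam → V t ≤ vb := by
    intro t ht hLle
    have hIt := hIpos t ht
    have h1 : η * V t ≤ η * vb := by
      rw [hLt] at hLle; rw [hlamdef] at hLle; linarith
    exact le_of_mul_le_mul_left h1 hηpos
  -- MAIN CLAIM : eventually L ≥ lb
  have hLev : ∀ᶠ t in Filter.atTop, lb ≤ L t := by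
    by_contra hn
    rw [Filter.not_eventually] at hn
    by_cases hcase : ∃ᶠ t in Filter.atTop, lam ≤ L t
    · -- case 2 : L oscillates
      obtain ⟨w0, hw0ge, hw0⟩ := Filter.frequently_atTop.1 hcase 0
      obtain ⟨t₂, ht₂ge, ht₂⟩ := Filter.frequently_atTop.1 hn w0
      push_neg at ht₂
      have ht₂0 : (0:ℝ) ≤ t₂ := le_trans hw0ge ht₂ge
      set Sset : Set ℝ := Set.Icc w0 t₂ ∩ {t | lam ≤ L t} with hSset
      have hne : Sset.Nonempty := ⟨w0, ⟨le_refl _, ht₂ge⟩, hw0⟩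
      have hbdd : BddAbove Sset := ⟨t₂, fun x hx => hx.1.2⟩
      have hclosed : IsClosed Sset :=
        isClosed_Icc.inter (isClosed_le continuous_const hLdiff.continuous)
      have ht₁S : sSup Sset ∈ Sset := hclosed.csSup_mem hne hbdd
      have ht₁lam : lam ≤ L (sSup Sset) := ht₁S.2
      have ht₁mem := ht₁S.1
      have ht₁0 : (0:ℝ) ≤ sSup Sset := le_trans hw0ge ht₁mem.1
      have ht₁lt : sSup Sset < t₂ := by
        rcases eq_or_lt_of_le ht₁mem.2 with h | h
        · exfalso; rw [h] at ht₁lam; linarith [hlblam]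
        · exact h
      have hafter : ∀ x, x ∈ Set.Ioc (sSup Sset) t₂ → L x < lam := by
        intro x hx
        by_contra hge
        push_neg at hge
        have : x ∈ Sset := ⟨⟨le_trans ht₁mem.1 hx.1.le, hx.2⟩, hge⟩
        exact absurd (le_csSup hbdd this) (not_le.2 hx.1)
      have hLt₁ : L (sSup Sset) = lam := by
        rcases eq_or_lt_of_le ht₁lam with h | h
        · exact h.symm
        · exfalso
          have hcont : ContinuousAt L (sSup Sset) := hLdiff.continuous.continuousAt
          have hev2 : ∀ᶠ x in nhdsWithin (sSup Sset) (Set.Ioi (sSup Sset)), lam < L x :=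
            (hcont.eventually (eventually_gt_nhds h)).filter_mono nhdsWithin_le_nhds
          have h3 : Set.Ioc (sSup Sset) t₂ ∈ nhdsWithin (sSup Sset) (Set.Ioi (sSup Sset)) :=
            Ioc_mem_nhdsGT ht₁lt
          obtain ⟨x, hx1, hx2⟩ := (hev2.and (eventually_of_mem h3 (fun x hx => hx))).exists
          exact absurd (hafter x hx2) (not_lt.2 hx1.le)
      have hIccle : ∀ x, x ∈ Set.Icc (sSup Sset) t₂ → L x ≤ lam := by
        intro x hx
        rcases eq_or_lt_of_le hx.1 with h | h
        · rw [← h]; exact le_of_eq hLt₁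
        · exact (hafter x ⟨h, hx.2⟩).le
      have hVsm2 : ∀ x, x ∈ Set.Icc (sSup Sset) t₂ → V x ≤ vb := by
        intro x hx
        exact hVsm x (le_trans ht₁0 hx.1) (hIccle x hx)
      -- backward exponential estimate gives a time bound
      have hback : lam * Real.exp (-(Γ*(t₂ - sSup Sset))) ≤ L t₂ := by
        apply exp_mono_bound hLdiff ht₁lt.le (le_of_eq hLt₁.symm)
        intro x hx
        exact hLlow x (le_trans ht₁0 hx.1)
      have htime : sSup Sset + 2*D < t₂ := by
        have h1 : lam * Real.exp (-(Γ*(t₂ - sSup Sset))) < lam * Real.exp (-(Γ*(2*D))) := by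
          rw [← hlbdef]; linarith
        have h2 : Real.exp (-(Γ*(t₂ - sSup Sset))) < Real.exp (-(Γ*(2*D))) :=
          lt_of_mul_lt_mul_left h1 hlampos.le
        have h3 : -(Γ*(t₂ - sSup Sset)) < -(Γ*(2*D)) := Real.exp_lt_exp.mp h2
        have h4 : Γ*(2*D) < Γ*(t₂ - sSup Sset) := by linarith
        have h5 : 2*D < t₂ - sSup Sset := lt_of_mul_lt_mul_left h4 hΓpos.le
        linarith
      -- T climbs to T0 - ε2 by time t₁ + D and stays
      have hTst2 : ∀ x, x ∈ Set.Icc (sSup Sset + D) t₂ → T0 - ε2 ≤ T x := by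
        have hr := reach_stay (t₀ := sSup Sset) (t₂ := t₂) (b := T0 - ε2) (H := T0) hTdiff
          (by positivity : (0:ℝ) < μ/2) hT0pos.le
          (by linarith [hTpos (sSup Sset) ht₁0])
          (by rw [← hDdef]; linarith)
          (by
            intro x hx hTle
            exact hTclimb2 x (le_trans ht₁0 hx.1) (hVsm2 x hx) hTle)
        intro x hx
        exact hr x (by rw [hDdef] at hx; exact hx)
      -- L is monotone on [t₁ + D, t₂]
      have ht₁D : sSup Sset + D ≤ t₂ := by linarith
      have hmono : MonotoneOn L (Set.Icc (sSup Sset + D) t₂) := by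
        apply mono_aux hLdiff
        intro x hx
        have hx0 : (0:ℝ) ≤ x := le_trans (by linarith) hx.1
        have h1 := hLgrow x hx0 (hTst2 x hx)
          (hVsm2 x ⟨by linarith [hx.1], hx.2⟩)
        have h2 := hLpos x hx0
        have h3 := mul_pos hσpos h2
        linarith only [h1, h3]
      have hL21 : L (sSup Sset + D) ≤ L t₂ :=
        hmono ⟨le_refl _, ht₁D⟩ ⟨by linarith, le_refl _⟩ ht₁D
      -- backward estimate from t₁ to t₁ + D
      have hbk2 : lam * Real.exp (-(Γ*D)) ≤ L (sSup Sset + D) := by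
        have h0 := exp_mono_bound hLdiff (x := sSup Sset) (y := sSup Sset + D)
          (by linarith) (le_of_eq hLt₁.symm)
          (fun x hx => hLlow x (le_trans ht₁0 hx.1))
        have e : sSup Sset + D - sSup Sset = D := by ring
        rwa [e] at h0
      -- contradiction
      have hfin : lam * Real.exp (-(Γ*(2*D))) < lam * Real.exp (-(Γ*D)) := by
        apply mul_lt_mul_of_pos_left _ hlampos
        apply Real.exp_lt_exp.mpr
        have h6 := mul_pos hΓpos hDpos
        linarith only [h6]
      rw [← hlbdef] at hfin
      linarith
    · -- case 1 : eventually L < lam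
      rw [Filter.not_frequently] at hcase
      obtain ⟨w0, hw0⟩ := Filter.eventually_atTop.1 hcase
      obtain ⟨w1, hw1def⟩ : ∃ x:ℝ, x = max w0 0 := ⟨_, rfl⟩
      have hw10 : 0 ≤ w1 := by rw [hw1def]; exact le_max_right _ _
      have hLsm : ∀ t, w1 ≤ t → L t < lam := by
        intro t htw
        have : w0 ≤ t := le_trans (by rw [hw1def]; exact le_max_left _ _) htw
        exact not_le.1 (hw0 t this)
      have hVsm3 : ∀ t, w1 ≤ t → V t ≤ vb :=
        fun t htw => hVsm t (le_trans hw10 htw) (hLsm t htw).le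
      -- T climbs and stays above T0 - ε2 from time w1 + D on
      have hTst3 : ∀ t, w1 + D ≤ t → T0 - ε2 ≤ T t := by
        intro u hu
        have hr := reach_stay (t₀ := w1) (t₂ := u) (b := T0 - ε2) (H := T0) hTdiff
          (by positivity : (0:ℝ) < μ/2) hT0pos.le
          (by linarith [hTpos w1 hw10])
          (by rw [← hDdef]; linarith)
          (by
            intro x hx hTle
            exact hTclimb2 x (le_trans hw10 hx.1) (hVsm3 x hx.1) hTle)
        have := hr u ⟨by rw [← hDdef]; linarith, le_refl u⟩
        exact this
      -- L grows exponentially from w1 + D on : contradiction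
      obtain ⟨base, hbasedef⟩ : ∃ x:ℝ, x = w1 + D := ⟨_, rfl⟩
      have hbase0 : 0 ≤ base := by rw [hbasedef]; linarith
      have hLb := hLpos base hbase0
      obtain ⟨Δ, hΔdef⟩ : ∃ x:ℝ, x = max ((Real.log (lam/(L base)) + 1)/σ) 0 := ⟨_, rfl⟩
      have hΔ0 : 0 ≤ Δ := by rw [hΔdef]; exact le_max_right _ _
      have hgrow := exp_grow_bound hLdiff (x := base) (y := base + Δ) (σ := σ)
        (by linarith) (le_refl (L base))
        (by
          intro x hx
          have hx0 : 0 ≤ x := le_trans hbase0 hx.1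
          apply hLgrow x hx0
          · exact hTst3 x (by rw [← hbasedef]; exact hx.1)
          · exact hVsm3 x (by rw [hbasedef] at hx; linarith [hx.1, hDpos]))
      have e : σ*(base + Δ - base) = σ*Δ := by ring
      rw [e] at hgrow
      have hσΔ : Real.log (lam/(L base)) + 1 ≤ σ*Δ := by
        have h1 : (Real.log (lam/(L base)) + 1)/σ ≤ Δ := by
          rw [hΔdef]; exact le_max_left _ _
        have h2 := mul_le_mul_of_nonneg_left h1 hσpos.le
        have e2 : σ*((Real.log (lam/(L base)) + 1)/σ) = Real.log (lam/(L base)) + 1 := by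
          field_simp
        rw [e2] at h2
        exact h2
      have hexp : lam/(L base) * Real.exp 1 ≤ Real.exp (σ*Δ) := by
        have h3 := Real.exp_le_exp.mpr hσΔ
        rw [Real.exp_add, Real.exp_log (by positivity : 0 < lam/(L base))] at h3
        exact h3
      have hcontra : lam < L (base + Δ) := by
        have h4 : L base * (lam/(L base) * Real.exp 1) ≤ L base * Real.exp (σ*Δ) :=
          mul_le_mul_of_nonneg_left hexp hLb.le
        have e3 : L base * (lam/(L base) * Real.exp 1) = lam * Real.exp 1 := by
          field_simp
        rw [e3] at h4
        have h5 : lam < lam * Real.exp 1 := by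
          have hgt : (1:ℝ) < Real.exp 1 := by
            have h7 := Real.exp_one_gt_d9
            linarith only [h7]
          have h8 := mul_lt_mul_of_pos_left hgt hlampos
          linarith only [h8]
        linarith
      have := hLsm (base + Δ) (by rw [hbasedef]; linarith [hDpos])
      linarith
  -- eventual lower bound for V
  obtain ⟨C2, hC2def⟩ : ∃ x:ℝ, x = q*η + c + k1*B := ⟨_, rfl⟩
  have hC2pos : 0 < C2 := by rw [hC2def]; positivity
  obtain ⟨v0, hv0def⟩ : ∃ x:ℝ, x = q*lb/(2*C2) := ⟨_, rfl⟩
  have hv0pos : 0 < v0 := by rw [hv0def]; positivity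
  obtain ⟨w2, hw2⟩ := Filter.eventually_atTop.1 hLev
  obtain ⟨w3, hw3def⟩ : ∃ x:ℝ, x = max w2 0 := ⟨_, rfl⟩
  have hw30 : 0 ≤ w3 := by rw [hw3def]; exact le_max_right _ _
  have hLge : ∀ t, w3 ≤ t → lb ≤ L t := by
    intro t htw
    exact hw2 t (le_trans (by rw [hw3def]; exact le_max_left _ _) htw)
  have hVev : ∀ t, w3 + v0/(q*lb/2) ≤ t → v0 ≤ V t := by
    intro u hu
    have hr := reach_stay (t₀ := w3) (t₂ := u) (b := v0) (H := v0) (r := q*lb/2) hVdiff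
      (by positivity) hv0pos.le (by linarith [hVpos w3 hw30])
      (by linarith)
      (by
        intro x hx hVle
        have hx0 : 0 ≤ x := le_trans hw30 hx.1
        rw [hV x hx0]
        have hVx := hVpos x hx0
        have hIx := hIpos x hx0
        have hTx := hTpos x hx0
        have hIlow : lb - η*V x ≤ I x := by
          have := hLge x hx.1
          rw [hLt] at this
          linarith
        have b1 : q*(lb - η*V x) ≤ q*I x := mul_le_mul_of_nonneg_left hIlow hq.le
        have b2 : c*V x ≤ c*v0 := mul_le_mul_of_nonneg_left hVle hc.le
        have b3 : k1*V x*T x ≤ k1*B*v0 := by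
          calc k1*V x*T x ≤ k1*V x*B := mul_le_mul_of_nonneg_left (hTub x hx0)
                (by positivity)
            _ = k1*B*V x := by ring
            _ ≤ k1*B*v0 := mul_le_mul_of_nonneg_left hVle (by positivity)
        have b4 : q*(η*V x) ≤ q*(η*v0) :=
          mul_le_mul_of_nonneg_left (mul_le_mul_of_nonneg_left hVle hηpos.le) hq.le
        have hC2v0 : C2*v0 = q*lb/2 := by
          rw [hv0def, hC2def]; field_simp
        have e : (q*η + c + k1*B)*v0 = C2*v0 := by rw [hC2def]
        have goal1 : q*lb - C2*v0 ≤ q*I x - c*V x - k1*V x*T x := by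
          rw [← e]
          have e2 : (q*η + c + k1*B)*v0 = q*(η*v0) + c*v0 + k1*B*v0 := by ring
          rw [e2]
          linarith only [b1, b2, b3, b4]
        rw [hC2v0] at goal1
        linarith only [goal1])
    have := hr u ⟨by linarith, le_refl u⟩
    exact this
  -- eventual lower bound for I
  obtain ⟨R2, hR2def⟩ : ∃ x:ℝ, x = β*ε₁*(v0/(1+α*v0)) := ⟨_, rfl⟩
  have hR2pos : 0 < R2 := by rw [hR2def]; positivity
  obtain ⟨i0, hi0def⟩ : ∃ x:ℝ, x = R2/(2*(δ+ρ)) := ⟨_, rfl⟩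
  have hi0pos : 0 < i0 := by rw [hi0def]; positivity
  obtain ⟨w5, hw5def⟩ : ∃ x:ℝ, x = max (w3 + v0/(q*lb/2)) (ε₁/(s/2)) := ⟨_, rfl⟩
  have hw50 : 0 ≤ w5 := by
    rw [hw5def]
    have : 0 ≤ ε₁/(s/2) := by positivity
    exact le_trans this (le_max_right _ _)
  have hIev : ∀ t, w5 + i0/(R2/2) ≤ t → i0 ≤ I t := by
    intro u hu
    have hr := reach_stay (t₀ := w5) (t₂ := u) (b := i0) (H := i0) (r := R2/2) hIdiff
      (by positivity) hi0pos.le (by linarith [hIpos w5 hw50])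
      (by linarith)
      (by
        intro x hx hIle
        have hx0 : 0 ≤ x := le_trans hw50 hx.1
        rw [hI x hx0]
        have hVx := hVpos x hx0
        have hTx := hTpos x hx0
        have hdenx := hden x hx0
        have hTgex : ε₁ ≤ T x := by
          apply hTlow
          exact le_trans (le_trans (le_max_right _ _) (le_of_eq hw5def.symm)) hx.1
        have hVgex : v0 ≤ V x := by
          apply hVev
          exact le_trans (le_trans (le_max_left _ _) (le_of_eq hw5def.symm)) hx.1
        -- V/(1+αV) ≥ v0/(1+α v0)
        have hfrac : v0/(1+α*v0) ≤ V x/(1+α*V x) := by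
          rw [div_le_div_iff₀ (by positivity) hdenx]
          have e : v0*(1+α*V x) = v0 + α*(v0*V x) := by ring
          have e2 : V x*(1+α*v0) = V x + α*(v0*V x) := by ring
          rw [e, e2]
          linarith only [hVgex]
        have hterm : R2 ≤ β*T x*V x/(1+α*V x) := by
          rw [hR2def]
          have h1 : β*ε₁*(v0/(1+α*v0)) ≤ β*ε₁*(V x/(1+α*V x)) :=
            mul_le_mul_of_nonneg_left hfrac (by positivity)
          have h2 : β*ε₁*(V x/(1+α*V x)) ≤ β*T x*(V x/(1+α*V x)) := by
            apply mul_le_mul_of_nonneg_right _ (by positivity)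
            exact mul_le_mul_of_nonneg_left hTgex hβ.le
          have e3 : β*T x*(V x/(1+α*V x)) = β*T x*V x/(1+α*V x) := by ring
          rw [e3] at h2
          linarith only [h1, h2]
        have hdecay : (δ+ρ)*I x ≤ (δ+ρ)*i0 := mul_le_mul_of_nonneg_left hIle (by positivity)
        have hhalf : (δ+ρ)*i0 = R2/2 := by
          rw [hi0def]; field_simp
        rw [hhalf] at hdecay
        linarith only [hterm, hdecay])
    have := hr u ⟨by linarith, le_refl u⟩
    exact this
  -- conclusion via liminf
  obtain ⟨εf, hεfdef⟩ : ∃ x:ℝ, x = min ε₁ (min v0 i0) := ⟨_, rfl⟩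
  have hεfpos : 0 < εf := by
    rw [hεfdef]
    exact lt_min hε₁pos (lt_min hv0pos hi0pos)
  refine ⟨εf, hεfpos, ?_, ?_, ?_⟩
  · have hbdd : Filter.IsBoundedUnder (· ≤ ·) Filter.atTop T :=
      ⟨B, Filter.eventually_map.mpr ((Filter.eventually_ge_atTop 0).mono
        (fun t ht => hTub t ht))⟩
    apply Filter.le_liminf_of_le hbdd.isCoboundedUnder_ge
    exact (Filter.eventually_ge_atTop (ε₁/(s/2))).mono (fun t ht => by
      have := hTlow t ht
      rw [hεfdef]
      exact le_trans (min_le_left _ _) this)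
  · have hbdd : Filter.IsBoundedUnder (· ≤ ·) Filter.atTop I :=
      ⟨B, Filter.eventually_map.mpr ((Filter.eventually_ge_atTop 0).mono
        (fun t ht => hIub t ht))⟩
    apply Filter.le_liminf_of_le hbdd.isCoboundedUnder_ge
    exact (Filter.eventually_ge_atTop (w5 + i0/(R2/2))).mono (fun t ht => by
      have := hIev t ht
      rw [hεfdef]
      exact le_trans (le_trans (min_le_right _ _) (min_le_right _ _)) this)
  · have hbdd : Filter.IsBoundedUnder (· ≤ ·) Filter.atTop V :=
      ⟨BV, Filter.eventually_map.mpr ((Filter.eventually_ge_atTop 0).mono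
        (fun t ht => hVub t ht))⟩
    apply Filter.le_liminf_of_le hbdd.isCoboundedUnder_ge
    exact (Filter.eventually_ge_atTop (w3 + v0/(q*lb/2))).mono (fun t ht => by
      have := hVev t ht
      rw [hεfdef]
      exact le_trans (le_trans (min_le_right _ _) (min_le_left _ _)) this)
end

section
/- Let p, r, A, τ be real numbers with p > 0, r > 0, A > p·r, and τ ≥ 0. Then there exists a real number λ > 0 such that λ² + (p + r)·λ + p·r − A·exp(−λ·τ) = 0. -/
theorem stmt_12 (p r A τ : ℝ) (hp : 0 < p) (hr : 0 < r) (hA : A > p*r)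
    (hτ : 0 ≤ τ) :
    ∃ lam : ℝ, 0 < lam ∧
      lam^2 + (p + r)*lam + p*r - A*Real.exp (-lam*τ) = 0 := by
  set f : ℝ → ℝ := fun x => x^2 + (p + r)*x + p*r - A*Real.exp (-x*τ) with hf
  have hcont : Continuous f := by
    apply Continuous.sub
    · continuity
    · exact continuous_const.mul (Real.continuous_exp.comp ((continuous_id.neg).mul continuous_const))
  have hApos : 0 < A := lt_trans (mul_pos hp hr) hA
  set b : ℝ := max 1 A with hb
  have hb1 : (1:ℝ) ≤ b := le_max_left _ _
  have hbA : A ≤ b := le_max_right _ _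
  have hbpos : 0 < b := lt_of_lt_of_le one_pos hb1
  have hbsq : A ≤ b^2 := le_trans hbA (by nlinarith)
  have hf0 : f 0 < 0 := by
    simp only [hf]
    norm_num
    linarith
  have hfb : 0 < f b := by
    have hexp : Real.exp (-b*τ) ≤ 1 := by
      rw [Real.exp_le_one_iff]
      nlinarith
    have : A * Real.exp (-b*τ) ≤ A := by nlinarith [Real.exp_pos (-b*τ)]
    simp only [hf]
    nlinarith [mul_pos (add_pos hp hr) hbpos, mul_pos hp hr]
  have h0b : (0:ℝ) ≤ b := le_of_lt hbpos
  have := intermediate_value_Ioo h0b (hcont.continuousOn)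
  have hmem : (0:ℝ) ∈ Set.Ioo (f 0) (f b) := ⟨hf0, hfb⟩
  obtain ⟨lam, hlam, hval⟩ := this hmem
  exact ⟨lam, hlam.1, hval⟩
end

section
/- Let p, r, A, τ be real numbers with p > 0, r > 0, 0 < A < p·r, and τ ≥ 0. Then every complex number λ satisfying λ² + (p + r)·λ + p·r − A·exp(−λ·τ) = 0 has Re λ < 0. -/
theorem stmt_13 (p r A τ : ℝ) (hp : 0 < p) (hr : 0 < r) (hA : 0 < A)
    (hApr : A < p*r) (hτ : 0 ≤ τ) :
    ∀ lam : ℂ,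
      lam^2 + ((p + r : ℝ) : ℂ)*lam + ((p*r : ℝ) : ℂ)
        - (A : ℂ)*Complex.exp (-lam*(τ : ℂ)) = 0 →
      lam.re < 0 := by
  intro lam hlam
  by_contra hre
  push_neg at hre
  push_cast at hlam
  have hfac : (lam + (p : ℂ)) * (lam + (r : ℂ))
      = (A : ℂ) * Complex.exp (-lam * (τ : ℂ)) := by
    linear_combination hlam
  have h1 : p ≤ ‖lam + (p : ℂ)‖ := by
    have : p ≤ (lam + (p : ℂ)).re := by simp; linarith
    exact this.trans (Complex.re_le_norm _)
  have h2 : r ≤ ‖lam + (r : ℂ)‖ := by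
    have : r ≤ (lam + (r : ℂ)).re := by simp; linarith
    exact this.trans (Complex.re_le_norm _)
  have hexp : ‖Complex.exp (-lam * (τ : ℂ))‖ ≤ 1 := by
    rw [Complex.norm_exp]
    apply Real.exp_le_one_iff.mpr
    simp [neg_mul]
    positivity
  have habs := congrArg norm hfac
  rw [norm_mul, norm_mul, Complex.norm_real, Real.norm_eq_abs, abs_of_pos hA] at habs
  have hle : p * r ≤ ‖lam + (p : ℂ)‖ * ‖lam + (r : ℂ)‖ :=
    mul_le_mul h1 h2 hr.le (norm_nonneg _)
  have hlt : A * ‖Complex.exp (-lam * (τ : ℂ))‖ ≤ A :=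
    mul_le_of_le_one_right hA.le hexp
  linarith [habs ▸ hle]
end

section
/- Let a1, a2, a3, a4, a5 be real numbers and set m1 = a1² − 2·a2, m2 = a2² − 2·a1·a5 − a4², m3 = a5² − a3². Let ω be a real number with ω > 0 such that ω⁶ + m1·ω⁴ + m2·ω² + m3 = 0 and a3² + a4²·ω² > 0. Then there exists a real number τ ≥ 0 such that (iω)³ + a1·(iω)² + a2·(iω) + a5 + exp(−iω·τ)·(a3 + a4·iω) = 0, where i is the imaginary unit. -/
theorem stmt_17 (a1 a2 a3 a4 a5 : ℝ)
    (m1 m2 m3 : ℝ)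
    (hm1 : m1 = a1^2 - 2*a2) (hm2 : m2 = a2^2 - 2*a1*a5 - a4^2)
    (hm3 : m3 = a5^2 - a3^2)
    (ω : ℝ) (hω : 0 < ω)
    (hsextic : ω^6 + m1*ω^4 + m2*ω^2 + m3 = 0)
    (hdenom : 0 < a3^2 + a4^2*ω^2) :
    ∃ τ : ℝ, 0 ≤ τ ∧
      (Complex.I*(ω : ℂ))^3 + (a1 : ℂ)*(Complex.I*(ω : ℂ))^2
        + (a2 : ℂ)*(Complex.I*(ω : ℂ)) + (a5 : ℂ)
        + Complex.exp (-(Complex.I*(ω : ℂ))*(τ : ℂ))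
          * ((a3 : ℂ) + (a4 : ℂ)*(Complex.I*(ω : ℂ))) = 0 := by
  set P : ℂ := (Complex.I*(ω : ℂ))^3 + (a1 : ℂ)*(Complex.I*(ω : ℂ))^2
        + (a2 : ℂ)*(Complex.I*(ω : ℂ)) + (a5 : ℂ) with hPdef
  set Q : ℂ := (a3 : ℂ) + (a4 : ℂ)*(Complex.I*(ω : ℂ)) with hQdef
  have hQre : Q.re = a3 := by simp [hQdef]
  have hQim : Q.im = a4 * ω := by simp [hQdef]
  have hnQ : Complex.normSq Q = a3^2 + a4^2*ω^2 := by
    rw [Complex.normSq_apply, hQre, hQim]; ring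
  have hQne : Q ≠ 0 := by
    intro h
    rw [h] at hnQ
    simp at hnQ
    linarith
  have hPre : P.re = a5 - a1 * ω^2 := by
    simp [hPdef, pow_succ, pow_zero]
    ring
  have hPim : P.im = a2 * ω - ω^3 := by
    simp [hPdef, pow_succ, pow_zero]
    ring
  have hnP : Complex.normSq P = Complex.normSq Q := by
    rw [Complex.normSq_apply, Complex.normSq_apply, hPre, hPim, hQre, hQim]
    subst hm1 hm2 hm3
    linear_combination hsextic
  set z : ℂ := -P / Q with hzdef
  have habs : ‖z‖ = 1 := by
    rw [hzdef, norm_div, norm_neg]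
    rw [div_eq_one_iff_eq (by simpa using hQne)]
    have := congrArg Real.sqrt hnP
    simpa [Complex.norm_def] using this
  set θ := Complex.arg z with hθ
  have hθle : θ ≤ Real.pi := Complex.arg_le_pi z
  refine ⟨(2*Real.pi - θ)/ω, ?_, ?_⟩
  · apply div_nonneg _ hω.le
    have : Real.pi < 2*Real.pi := by linarith [Real.pi_pos]
    linarith
  · have hexp : Complex.exp (-(Complex.I*(ω : ℂ)) * (((2*Real.pi - θ)/ω : ℝ) : ℂ)) = z := by
      have harg : (-(Complex.I*(ω : ℂ)) * (((2*Real.pi - θ)/ω : ℝ) : ℂ))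
          = θ * Complex.I - 2*Real.pi*Complex.I := by
        have hωne : (ω:ℂ) ≠ 0 := by exact_mod_cast hω.ne'
        push_cast
        field_simp
        ring
      rw [harg, Complex.exp_sub, Complex.exp_two_pi_mul_I]
      rw [div_one]
      have := Complex.norm_mul_exp_arg_mul_I z
      rw [habs] at this
      simpa [hθ] using this
    rw [hexp, hzdef]
    field_simp
    ring
end

section
/- Let a1, a2, a3, a4, a5 be real numbers and let ω > 0 be a real number. Set D = (a2·ω − ω³)² + (a5 − a1·ω²)², and assume D = a3² + a4²·ω², D ≠ 0, and ω⁶ + (a1² − 2a2)·ω⁴ + (a2² − 2a1·a5 − a4²)·ω² + (a5² − a3²) = 0. Let z = iω ∈ ℂ. Then Re( (2z³ + a1·z² − a5) / (−z²·(z³ + a1·z² + a2·z + a5)) ) + Re( −a3 / (z²·(a3 + a4·z)) ) = (3ω⁴ + 2(a1² − 2a2)·ω² + (a2² − 2a1·a5 − a4²)) / D. -/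
theorem stmt_18 (a1 a2 a3 a4 a5 ω : ℝ) (hω : 0 < ω)
    (D : ℝ) (hD : D = (a2*ω - ω^3)^2 + (a5 - a1*ω^2)^2)
    (hDeq : D = a3^2 + a4^2*ω^2) (hDne : D ≠ 0)
    (hsextic : ω^6 + (a1^2 - 2*a2)*ω^4 + (a2^2 - 2*a1*a5 - a4^2)*ω^2
      + (a5^2 - a3^2) = 0)
    (z : ℂ) (hz : z = Complex.I*(ω : ℂ)) :
    ((2*z^3 + (a1 : ℂ)*z^2 - (a5 : ℂ)) /
        (-(z^2)*(z^3 + (a1 : ℂ)*z^2 + (a2 : ℂ)*z + (a5 : ℂ)))).re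
      + ((-(a3 : ℂ)) / (z^2*((a3 : ℂ) + (a4 : ℂ)*z))).re
      = (3*ω^4 + 2*(a1^2 - 2*a2)*ω^2 + (a2^2 - 2*a1*a5 - a4^2)) / D := by
  have hω2 : ω^2 ≠ 0 := pow_ne_zero 2 hω.ne'
  subst hz
  have hd1 : Complex.normSq (-((Complex.I*(ω:ℂ))^2) *
      ((Complex.I*(ω:ℂ))^3 + (a1:ℂ)*(Complex.I*(ω:ℂ))^2 + (a2:ℂ)*(Complex.I*(ω:ℂ)) + (a5:ℂ)))
      = ω^4 * D := by
    simp only [Complex.normSq_apply, Complex.mul_re, Complex.mul_im,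
      Complex.I_re, Complex.I_im, Complex.ofReal_re, Complex.ofReal_im,
      Complex.add_re, Complex.add_im, Complex.neg_re, Complex.neg_im,
      pow_succ, pow_zero, one_mul]
    rw [hD]; ring
  have hd2 : Complex.normSq ((Complex.I*(ω:ℂ))^2 * ((a3:ℂ) + (a4:ℂ)*(Complex.I*(ω:ℂ))))
      = ω^4 * D := by
    simp only [Complex.normSq_apply, Complex.mul_re, Complex.mul_im,
      Complex.I_re, Complex.I_im, Complex.ofReal_re, Complex.ofReal_im,
      Complex.add_re, Complex.add_im, Complex.neg_re, Complex.neg_im,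
      pow_succ, pow_zero, one_mul]
    rw [hDeq]; ring
  have hden : ω^2 * D ≠ 0 := mul_ne_zero hω2 hDne
  have h1 : ((2*(Complex.I*(ω:ℂ))^3 + (a1:ℂ)*(Complex.I*(ω:ℂ))^2 - (a5:ℂ)) /
      (-((Complex.I*(ω:ℂ))^2)*((Complex.I*(ω:ℂ))^3 + (a1:ℂ)*(Complex.I*(ω:ℂ))^2
        + (a2:ℂ)*(Complex.I*(ω:ℂ)) + (a5:ℂ)))).re
      = (2*ω^6 + (a1^2 - 2*a2)*ω^4 - a5^2) / (ω^2 * D) := by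
    rw [Complex.div_re, hd1]
    simp only [Complex.mul_re, Complex.mul_im,
      Complex.I_re, Complex.I_im, Complex.ofReal_re, Complex.ofReal_im,
      Complex.add_re, Complex.add_im, Complex.sub_re, Complex.sub_im,
      Complex.neg_re, Complex.neg_im, Complex.re_ofNat, Complex.im_ofNat,
      pow_succ, pow_zero, one_mul]
    rw [← add_div]
    field_simp
    ring
  have h2 : ((-(a3:ℂ)) / ((Complex.I*(ω:ℂ))^2*((a3:ℂ) + (a4:ℂ)*(Complex.I*(ω:ℂ))))).re
      = a3^2 / (ω^2 * D) := by
    rw [Complex.div_re, hd2]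
    simp only [Complex.mul_re, Complex.mul_im,
      Complex.I_re, Complex.I_im, Complex.ofReal_re, Complex.ofReal_im,
      Complex.add_re, Complex.add_im, Complex.neg_re, Complex.neg_im,
      pow_succ, pow_zero, one_mul]
    rw [← add_div]
    field_simp
    ring
  rw [h1, h2, ← add_div, div_eq_div_iff hden hDne]
  linear_combination (-D) * hsextic
end
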